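/- Fix λ ∈ ℝ. Let p1,q1,r1,s1,v1 : ℝ → ℝ be functions and a,b,c : ℝ → ℝ be differentiable functions satisfying, at every x ∈ ℝ: a' = −q1 b λ + p1 c λ − v1 b + s1 c; b' = −2 p1 a λ + 2 b λ² − 2 s1 a − 2 r1 b; c' = 2 q1 a λ − 2 c λ² + 2 v1 a + 2 r1 c. Then the function x ↦ a(x)² + b(x)·c(x) is constant on ℝ. -/

import Mathlib

/-- If differentiable `a, b, c` satisfy the three scalar differential equations
`a' = −q1·b·λ + p1·c·λ − v1·b + s1·c`, `b' = −2p1·a·λ + 2b·λ² − 2s1·a − 2r1·b`,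
`c' = 2q1·a·λ − 2c·λ² + 2v1·a + 2r1·c` at every `x`, then `x ↦ a(x)² + b(x)·c(x)`
is constant on `ℝ`. -/
theorem a_sq_add_bc_constant (lam : ℝ) (p1 q1 r1 s1 v1 a b c : ℝ → ℝ)
    (ha : ∀ x : ℝ, HasDerivAt a
      (-(q1 x) * b x * lam + p1 x * c x * lam - v1 x * b x + s1 x * c x) x)
    (hb : ∀ x : ℝ, HasDerivAt b
      (-2 * p1 x * a x * lam + 2 * b x * lam ^ 2 - 2 * s1 x * a x - 2 * r1 x * b x) x)
    (hc : ∀ x : ℝ, HasDerivAt c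
      (2 * q1 x * a x * lam - 2 * c x * lam ^ 2 + 2 * v1 x * a x + 2 * r1 x * c x) x) :
    ∀ x y : ℝ, a x ^ 2 + b x * c x = a y ^ 2 + b y * c y := by
  have key : ∀ x : ℝ, HasDerivAt (fun t => a t ^ 2 + b t * c t) 0 x := by
    intro x
    have h := ((ha x).pow 2).add ((hb x).mul (hc x))
    refine h.congr_deriv ?_
    ring
  exact is_const_of_deriv_eq_zero (fun x => (key x).differentiableAt)
    (fun x => (key x).deriv)
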